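/- In ℝ³ minus the z-axis, with E₁ = I₃ × R₃ where I₃ = (−2xz,−2yz,x²+y²−z²) and R₃ = (−y,x,0), the function f(x,y,z) = −(x²+y²+z²)²/(x²+y²) has gradient parallel to E₁ at every point; i.e., ∇f × E₁ = 0. Hence the level surfaces of f (toroids tangent to the z-axis at the origin) are orthogonal to E₁. -/

import Mathlib

open Matrix BigOperators

/-- Partial derivative in the direction of the k-th coordinate. -/
noncomputable def pd3 (k : Fin 3) (φ : (Fin 3 → ℝ) → ℝ) (p : Fin 3 → ℝ) : ℝ :=
  fderiv ℝ φ p (Pi.single k 1)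

/-- The rotation field around the z-axis: R₃ = (−y, x, 0). -/
def R3 (p : Fin 3 → ℝ) : Fin 3 → ℝ := ![-(p 1), p 0, 0]

/-- The inversion field I₃ = (−2xz, −2yz, x²+y²−z²). -/
def I3 (p : Fin 3 → ℝ) : Fin 3 → ℝ :=
  ![-2 * p 0 * p 2, -2 * p 1 * p 2, p 0 ^ 2 + p 1 ^ 2 - p 2 ^ 2]

set_option maxHeartbeats 1000000 in
/-- the gradient of f = −(x²+y²+z²)²/(x²+y²) is parallel to
E₁ = I₃ × R₃ at every point off the z-axis, i.e. ∇f × E₁ = 0. -/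
theorem stmt16 (p : Fin 3 → ℝ) (hp : p 0 ^ 2 + p 1 ^ 2 ≠ 0)
    (f : (Fin 3 → ℝ) → ℝ)
    (hf : ∀ q, f q = -((q 0 ^ 2 + q 1 ^ 2 + q 2 ^ 2) ^ 2) / (q 0 ^ 2 + q 1 ^ 2))
    (grad : Fin 3 → ℝ) (hgrad : ∀ i, grad i = fderiv ℝ f p (Pi.single i 1)) :
    crossProduct grad (crossProduct (I3 p) (R3 p)) = 0 := by
  have hp2 : p 0 * p 0 + p 1 * p 1 ≠ 0 := by rw [← pow_two, ← pow_two]; exact hp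
  have proj : ∀ i : Fin 3, HasFDerivAt (fun q : Fin 3 → ℝ => q i)
      (ContinuousLinearMap.proj (R := ℝ) (φ := fun _ : Fin 3 => ℝ) i) p :=
    fun i => (ContinuousLinearMap.proj (R := ℝ) (φ := fun _ : Fin 3 => ℝ) i).hasFDerivAt
  have hu := (((proj 0).mul (proj 0)).add ((proj 1).mul (proj 1))).add ((proj 2).mul (proj 2))
  have hv := ((proj 0).mul (proj 0)).add ((proj 1).mul (proj 1))
  have hn := (hu.mul hu).neg
  have hvi := (hasDerivAt_inv hp2).comp_hasFDerivAt p hv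
  have hF := hn.mul hvi
  have hfe : f = fun y : Fin 3 → ℝ =>
      -((y 0 * y 0 + y 1 * y 1 + y 2 * y 2) * (y 0 * y 0 + y 1 * y 1 + y 2 * y 2)) *
        ((fun y : ℝ => y⁻¹) ∘ fun x : Fin 3 → ℝ => x 0 * x 0 + x 1 * x 1) y := by
    funext q
    rw [hf q]
    simp only [Function.comp]
    rw [div_eq_mul_inv]
    ring_nf
  have hD := hF.fderiv
  change fderiv ℝ (fun y : Fin 3 → ℝ =>
      -((y 0 * y 0 + y 1 * y 1 + y 2 * y 2) * (y 0 * y 0 + y 1 * y 1 + y 2 * y 2)) *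
        ((fun y : ℝ => y⁻¹) ∘ fun x : Fin 3 → ℝ => x 0 * x 0 + x 1 * x 1) y) p = _ at hD
  rw [← hfe] at hD
  have hg0 : grad 0 = 2 * p 0 * (p 0 ^ 2 + p 1 ^ 2 + p 2 ^ 2) *
      ((p 0 ^ 2 + p 1 ^ 2 + p 2 ^ 2) - 2 * (p 0 ^ 2 + p 1 ^ 2)) / (p 0 ^ 2 + p 1 ^ 2) ^ 2 := by
    rw [hgrad 0, hD]
    simp [ContinuousLinearMap.add_apply, ContinuousLinearMap.smul_apply,
      ContinuousLinearMap.neg_apply, ContinuousLinearMap.proj_apply, Function.comp,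
      Pi.single_apply]
    field_simp
    ring
  have hg1 : grad 1 = 2 * p 1 * (p 0 ^ 2 + p 1 ^ 2 + p 2 ^ 2) *
      ((p 0 ^ 2 + p 1 ^ 2 + p 2 ^ 2) - 2 * (p 0 ^ 2 + p 1 ^ 2)) / (p 0 ^ 2 + p 1 ^ 2) ^ 2 := by
    rw [hgrad 1, hD]
    simp [ContinuousLinearMap.add_apply, ContinuousLinearMap.smul_apply,
      ContinuousLinearMap.neg_apply, ContinuousLinearMap.proj_apply, Function.comp,
      Pi.single_apply]
    field_simp
    ring
  have hg2 : grad 2 = -4 * p 2 * (p 0 ^ 2 + p 1 ^ 2 + p 2 ^ 2) / (p 0 ^ 2 + p 1 ^ 2) := by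
    rw [hgrad 2, hD]
    simp [ContinuousLinearMap.add_apply, ContinuousLinearMap.smul_apply,
      ContinuousLinearMap.neg_apply, ContinuousLinearMap.proj_apply, Function.comp,
      Pi.single_apply]
    field_simp
    ring
  funext i
  fin_cases i <;>
    simp [crossProduct, I3, R3, hg0, hg1, hg2] <;>
    field_simp <;>
    ring
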